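/- ∑_{m=1}^∞ ∑_{n=1}^∞ 1/(m² n² (m+n)²) = π⁶/2835. -/

import Mathlib

open Real Finset Function

set_option maxHeartbeats 1000000

namespace Stmt8Aux

noncomputable def F : ℕ × ℕ → ℝ := fun p =>
  1 / ((p.1 : ℝ) ^ 2 * (p.2 : ℝ) ^ 2 * ((p.1 : ℝ) + (p.2 : ℝ)) ^ 2)

noncomputable def G : ℕ × ℕ → ℝ := fun q =>
  1 / ((q.2 : ℝ) ^ 2 * (((q.1 - q.2 : ℕ)) : ℝ) ^ 2 * (q.1 : ℝ) ^ 2)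

lemma F_nonneg (p : ℕ × ℕ) : 0 ≤ F p := by unfold F; positivity

lemma G_nonneg (q : ℕ × ℕ) : 0 ≤ G q := by unfold G; positivity

lemma F_zero_left (n : ℕ) : F (0, n) = 0 := by simp [F]

lemma F_zero_right (m : ℕ) : F (m, 0) = 0 := by simp [F]

def e : ℕ × ℕ → ℕ × ℕ := fun p => (p.1 + p.2, p.1)

lemma e_inj : Injective e := by
  rintro ⟨a, b⟩ ⟨c, d⟩ h
  simp only [e, Prod.mk.injEq] at h
  obtain ⟨h1, h2⟩ := h
  subst h2
  simp at h1
  simp [h1]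

lemma G_e (p : ℕ × ℕ) : G (e p) = F p := by
  obtain ⟨m, n⟩ := p
  simp only [G, F, e, Nat.add_sub_cancel_left]
  push_cast
  ring_nf

lemma G_vanish : ∀ q ∉ Set.range e, G q = 0 := by
  rintro ⟨N, m⟩ hq
  have h : ¬ m ≤ N := by
    intro h
    exact hq ⟨(m, N - m), by simp [e, Nat.add_sub_cancel' h]⟩
  have : N - m = 0 := Nat.sub_eq_zero_of_le (le_of_not_ge h)
  simp [G, this]

lemma summable_inv_sq : Summable (fun n : ℕ => 1 / (n : ℝ) ^ 2) :=
  hasSum_zeta_two.summable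

lemma hF : Summable F := by
  have hg : Summable (fun p : ℕ × ℕ => (1 / (p.1 : ℝ) ^ 2) * (1 / (p.2 : ℝ) ^ 2)) :=
    by
      have h1 : 0 ≤ (fun n : ℕ => 1 / (n : ℝ) ^ 2) := fun n => by positivity
      exact summable_inv_sq.mul_of_nonneg summable_inv_sq h1 h1
  refine Summable.of_nonneg_of_le F_nonneg ?_ hg
  rintro ⟨m, n⟩
  rcases Nat.eq_zero_or_pos m with hm | hm
  · simp [hm, F]
  rcases Nat.eq_zero_or_pos n with hn | hn
  · simp [hn, F]
  have hm' : (0 : ℝ) < (m : ℝ) := by exact_mod_cast hm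
  have hn' : (0 : ℝ) < (n : ℝ) := by exact_mod_cast hn
  have h2 : (0 : ℝ) < (m : ℝ) ^ 2 * (n : ℝ) ^ 2 := by positivity
  have hm1 : (1 : ℝ) ≤ (m : ℝ) := by exact_mod_cast hm
  have hn1 : (1 : ℝ) ≤ (n : ℝ) := by exact_mod_cast hn
  have key : F (m, n) ≤ 1 / ((m : ℝ) ^ 2 * (n : ℝ) ^ 2) := by
    have hF' : F (m, n) = 1 / ((m : ℝ) ^ 2 * (n : ℝ) ^ 2 * ((m : ℝ) + (n : ℝ)) ^ 2) := rfl
    rw [hF']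
    apply one_div_le_one_div_of_le h2
    have h3 : (1 : ℝ) ≤ ((m : ℝ) + (n : ℝ)) ^ 2 := by nlinarith
    nlinarith [mul_le_mul_of_nonneg_left h3 h2.le]
  calc F (m, n) ≤ 1 / ((m : ℝ) ^ 2 * (n : ℝ) ^ 2) := key
    _ = (1 / (m : ℝ) ^ 2) * (1 / (n : ℝ) ^ 2) := by ring

lemma hG : Summable G := by
  have := (e_inj.summable_iff G_vanish (f := G)).mp
  apply this
  have : G ∘ e = F := funext G_e
  rw [this]
  exact hF

lemma tsum_G_eq_F : ∑' q, G q = ∑' p, F p := by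
  rw [← e_inj.tsum_eq (f := G) (support_subset_iff'.2 G_vanish)]
  exact tsum_congr G_e

noncomputable def a (N : ℕ) : ℝ := ∑' m : ℕ, G (N, m)

noncomputable def b (N : ℕ) : ℝ := ∑' n : ℕ, F (N, n)

lemma hFrow (N : ℕ) : Summable (fun n => F (N, n)) :=
  ((summable_prod_of_nonneg F_nonneg).mp hF).1 N

lemma hGrow (N : ℕ) : Summable (fun m => G (N, m)) :=
  ((summable_prod_of_nonneg G_nonneg).mp hG).1 N

lemma ha_summable : Summable a :=
  ((summable_prod_of_nonneg G_nonneg).mp hG).2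

lemma hb_summable : Summable b :=
  ((summable_prod_of_nonneg F_nonneg).mp hF).2

lemma tsum_a : ∑' N, a N = ∑' p, F p := by
  rw [← tsum_G_eq_F]
  exact (Summable.tsum_prod' hG hGrow).symm

lemma tsum_b : ∑' N, b N = ∑' p, F p :=
  (Summable.tsum_prod' hF hFrow).symm

lemma a_eq_sum (N : ℕ) : a N = ∑ m ∈ range (N + 1), G (N, m) := by
  apply tsum_eq_sum
  intro m hm
  have h : N < m := by simpa using hm
  have : N - m = 0 := Nat.sub_eq_zero_of_le h.le
  simp [G, this]

/-- partial sums of `1/(j+1)^p`. -/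
noncomputable def S (p N : ℕ) : ℝ := ∑ j ∈ range N, 1 / ((j : ℝ) + 1) ^ p

lemma S_succ (p N : ℕ) : S p (N + 1) = S p N + 1 / ((N : ℝ) + 1) ^ p := by
  simp [S, Finset.sum_range_succ]

lemma a_closed (K : ℕ) :
    a (K + 1) = 2 * S 2 (K + 1) / ((K : ℝ) + 1) ^ 4 + 4 * S 1 (K + 1) / ((K : ℝ) + 1) ^ 5
      - 6 / ((K : ℝ) + 1) ^ 6 := by
  set N : ℕ := K + 1 with hNdef
  have hNR : ((N : ℕ) : ℝ) = (K : ℝ) + 1 := by simp [hNdef]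
  rw [a_eq_sum]
  rw [Finset.sum_range_succ']   -- strip m = 0
  have h0 : G (N, 0) = 0 := by simp [G]
  rw [h0, add_zero]
  rw [Finset.sum_range_succ]    -- strip top term i = K, i.e. m = N
  have hN : G (N, K + 1) = 0 := by simp [G, hNdef]
  rw [hN, add_zero]
  have hterm : ∀ i ∈ range K, G (N, i + 1) =
      (1 / ((K : ℝ) + 1) ^ 4) * (1 / ((i : ℝ) + 1) ^ 2 + 1 / (((K - i : ℕ)) : ℝ) ^ 2)
      + (2 / ((K : ℝ) + 1) ^ 5) * (1 / ((i : ℝ) + 1) + 1 / (((K - i : ℕ)) : ℝ)) := by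
    intro i hi
    have hiK : i < K := Finset.mem_range.mp hi
    have hsub : (N - (i + 1) : ℕ) = K - i := by omega
    have hcast : (((K - i : ℕ)) : ℝ) = (K : ℝ) - (i : ℝ) := by
      rw [Nat.cast_sub hiK.le]
    have hG' : G (N, i + 1) =
        1 / ((((i + 1 : ℕ)) : ℝ) ^ 2 * (((K - i : ℕ)) : ℝ) ^ 2 * ((N : ℕ) : ℝ) ^ 2) := by
      simp only [G, hsub]
    rw [hG', hcast, hNR]
    have hx : (0 : ℝ) < (i : ℝ) + 1 := by positivity
    have hy : (0 : ℝ) < (K : ℝ) - (i : ℝ) := by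
      have : (i : ℝ) < (K : ℝ) := by exact_mod_cast hiK
      linarith
    have hz : ((K : ℝ) + 1) = ((i : ℝ) + 1) + ((K : ℝ) - (i : ℝ)) := by ring
    push_cast
    rw [hz]
    field_simp
    ring
  rw [Finset.sum_congr rfl hterm]
  rw [Finset.sum_add_distrib, ← Finset.mul_sum, ← Finset.mul_sum]
  have hrefl : ∀ p : ℕ, ∑ i ∈ range K, 1 / (((K - i : ℕ)) : ℝ) ^ p
      = ∑ i ∈ range K, 1 / ((i : ℝ) + 1) ^ p := by
    intro p
    rw [← Finset.sum_range_reflect (fun j => 1 / ((j : ℝ) + 1) ^ p) K]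
    apply Finset.sum_congr rfl
    intro i hi
    have hiK : i < K := Finset.mem_range.mp hi
    have : ((K - 1 - i : ℕ) : ℝ) + 1 = ((K - i : ℕ) : ℝ) := by
      have : (K - 1 - i) + 1 = K - i := by omega
      rw [← this]; push_cast; ring
    rw [this]
  have hsplit2 : ∑ i ∈ range K, (1 / ((i : ℝ) + 1) ^ 2 + 1 / (((K - i : ℕ)) : ℝ) ^ 2)
      = 2 * S 2 K := by
    rw [Finset.sum_add_distrib, hrefl 2]
    simp [S]; ring
  have hsplit1 : ∑ i ∈ range K, (1 / ((i : ℝ) + 1) + 1 / (((K - i : ℕ)) : ℝ))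
      = 2 * S 1 K := by
    have h1 := hrefl 1
    simp only [pow_one] at h1
    rw [Finset.sum_add_distrib, h1]
    simp [S]; ring
  rw [hsplit2, hsplit1]
  have hS2 : S 2 N = S 2 K + 1 / ((K : ℝ) + 1) ^ 2 := S_succ 2 K
  have hS1 : S 1 N = S 1 K + 1 / ((K : ℝ) + 1) ^ 1 := S_succ 1 K
  rw [hS2, hS1]
  have hKpos : (0 : ℝ) < (K : ℝ) + 1 := by positivity
  field_simp
  ring

lemma hasSum_u : HasSum (fun k : ℕ => 1 / ((k : ℝ) + 1) ^ 2) (π ^ 2 / 6) := by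
  have h := (hasSum_nat_add_iff' (f := fun n : ℕ => 1 / (n : ℝ) ^ 2) (g := π ^ 2 / 6) 1).mpr
    hasSum_zeta_two
  simp only [Finset.range_one, Finset.sum_singleton, Nat.cast_zero] at h
  norm_num at h
  convert h using 2 with k
  · rfl
  ring

lemma hasSum_v (N : ℕ) :
    HasSum (fun k : ℕ => 1 / ((N : ℝ) + (k : ℝ) + 1) ^ 2) (π ^ 2 / 6 - S 2 N) := by
  have h := (hasSum_nat_add_iff' (f := fun n : ℕ => 1 / (n : ℝ) ^ 2) (g := π ^ 2 / 6)
    (N + 1)).mpr hasSum_zeta_two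
  have hsum : ∑ i ∈ range (N + 1), 1 / ((i : ℕ) : ℝ) ^ 2 = S 2 N := by
    rw [Finset.sum_range_succ']
    simp [S]
  rw [hsum] at h
  convert h using 2 with k
  · rfl
  push_cast
  ring

lemma hasSum_tel (N : ℕ) :
    HasSum (fun k : ℕ => 1 / ((N : ℝ) + (k : ℝ) + 1) - 1 / ((N : ℝ) + (k : ℝ) + 2))
      (1 / ((N : ℝ) + 1)) := by
  set g : ℕ → ℝ := fun k => 1 / ((N : ℝ) + (k : ℝ) + 1) with hg
  have hfun : ∀ k : ℕ, 1 / ((N : ℝ) + (k : ℝ) + 1) - 1 / ((N : ℝ) + (k : ℝ) + 2)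
      = g k - g (k + 1) := by
    intro k
    simp only [hg]
    push_cast
    ring_nf
  have hnonneg : ∀ k : ℕ, 0 ≤ 1 / ((N : ℝ) + (k : ℝ) + 1) - 1 / ((N : ℝ) + (k : ℝ) + 2) := by
    intro k
    have h1 : (0 : ℝ) < (N : ℝ) + (k : ℝ) + 1 := by positivity
    have h2 : (0 : ℝ) < (N : ℝ) + (k : ℝ) + 2 := by positivity
    have := one_div_le_one_div_of_le h1 (by linarith : (N : ℝ) + (k : ℝ) + 1 ≤ (N : ℝ) + (k : ℝ) + 2)
    linarith
  rw [hasSum_iff_tendsto_nat_of_nonneg hnonneg]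
  have hps : ∀ n : ℕ, ∑ i ∈ range n, (1 / ((N : ℝ) + (i : ℝ) + 1) - 1 / ((N : ℝ) + (i : ℝ) + 2))
      = g 0 - g n := by
    intro n
    rw [Finset.sum_congr rfl (fun i _ => hfun i)]
    exact Finset.sum_range_sub' g n
  simp only [hps]
  have hg0 : g 0 = 1 / ((N : ℝ) + 1) := by simp [hg]
  rw [hg0]
  have hlim : Filter.Tendsto g Filter.atTop (nhds 0) := by
    apply squeeze_zero (fun n => by positivity)
      (fun n => ?_) tendsto_one_div_add_atTop_nhds_zero_nat
    simp only [hg]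
    apply one_div_le_one_div_of_le (by positivity)
    linarith [Nat.cast_nonneg (α := ℝ) N]
  have : Filter.Tendsto (fun n => 1 / ((N : ℝ) + 1) - g n) Filter.atTop
      (nhds (1 / ((N : ℝ) + 1) - 0)) := (tendsto_const_nhds).sub hlim
  simpa using this

lemma hasSum_w (N : ℕ) :
    HasSum (fun k : ℕ => 1 / ((k : ℝ) + 1) - 1 / ((N : ℝ) + (k : ℝ) + 1)) (S 1 N) := by
  induction N with
  | zero =>
    have : (fun k : ℕ => 1 / ((k : ℝ) + 1) - 1 / (((0 : ℕ) : ℝ) + (k : ℝ) + 1))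
        = fun _ => (0 : ℝ) := by
      funext k
      push_cast
      ring
    rw [this]
    have : S 1 0 = 0 := by simp [S]
    rw [this]
    exact hasSum_zero
  | succ N ih =>
    have hadd := ih.add (hasSum_tel N)
    have hfun : (fun k : ℕ => (1 / ((k : ℝ) + 1) - 1 / ((N : ℝ) + (k : ℝ) + 1))
        + (1 / ((N : ℝ) + (k : ℝ) + 1) - 1 / ((N : ℝ) + (k : ℝ) + 2)))
        = fun k : ℕ => 1 / ((k : ℝ) + 1) - 1 / (((N + 1 : ℕ) : ℝ) + (k : ℝ) + 1) := by
      funext k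
      push_cast
      ring_nf
    rw [hfun] at hadd
    have hS : S 1 (N + 1) = S 1 N + 1 / ((N : ℝ) + 1) := by
      rw [S_succ]; norm_num
    rw [hS]
    exact hadd

lemma b_closed (K : ℕ) :
    b (K + 1) = (1 / ((K : ℝ) + 1) ^ 4) * (π ^ 2 / 3 - S 2 (K + 1))
      - (2 / ((K : ℝ) + 1) ^ 5) * S 1 (K + 1) := by
  set N : ℕ := K + 1 with hNdef
  have hNR : ((N : ℕ) : ℝ) = (K : ℝ) + 1 := by simp [hNdef]
  have hNpos : (0 : ℝ) < (K : ℝ) + 1 := by positivity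
  have hrow := hFrow N
  have hzero : b N = F (N, 0) + ∑' k : ℕ, F (N, k + 1) := Summable.tsum_eq_zero_add hrow
  have hF0 : F (N, 0) = 0 := F_zero_right N
  have hfun : (fun k : ℕ => F (N, k + 1)) = fun k : ℕ =>
      (1 / ((K : ℝ) + 1) ^ 4) * (1 / ((k : ℝ) + 1) ^ 2)
      + ((1 / ((K : ℝ) + 1) ^ 4) * (1 / (((K : ℝ) + 1) + (k : ℝ) + 1) ^ 2)
        - (2 / ((K : ℝ) + 1) ^ 5) * (1 / ((k : ℝ) + 1) - 1 / (((K : ℝ) + 1) + (k : ℝ) + 1))) := by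
    funext k
    have hFval : F (N, k + 1)
        = 1 / (((N : ℕ) : ℝ) ^ 2 * (((k + 1 : ℕ)) : ℝ) ^ 2
            * (((N : ℕ) : ℝ) + (((k + 1 : ℕ)) : ℝ)) ^ 2) := rfl
    rw [hFval, hNR]
    have hx : (0 : ℝ) < (k : ℝ) + 1 := by positivity
    have hxz : (0 : ℝ) < ((K : ℝ) + 1) + ((k : ℝ) + 1) := by positivity
    push_cast
    field_simp
    ring
  have hv' : HasSum (fun k : ℕ => 1 / (((K : ℝ) + 1) + (k : ℝ) + 1) ^ 2) (π ^ 2 / 6 - S 2 N) := by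
    have := hasSum_v N
    convert this using 2 with k
    rw [hNR]
  have hw' : HasSum (fun k : ℕ => 1 / ((k : ℝ) + 1) - 1 / (((K : ℝ) + 1) + (k : ℝ) + 1))
      (S 1 N) := by
    have := hasSum_w N
    convert this using 2 with k
    rw [hNR]
  have hcomb := (hasSum_u.mul_left (1 / ((K : ℝ) + 1) ^ 4)).add
    ((hv'.mul_left (1 / ((K : ℝ) + 1) ^ 4)).sub (hw'.mul_left (2 / ((K : ℝ) + 1) ^ 5)))
  rw [hzero, hF0, zero_add, hfun, hcomb.tsum_eq]
  ring

lemma a_zero : a 0 = 0 := by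
  rw [a_eq_sum]
  simp [G]

lemma b_zero : b 0 = 0 := by
  have : (fun n : ℕ => F (0, n)) = fun _ => (0 : ℝ) := funext F_zero_left
  unfold b
  rw [this, tsum_zero]

lemma key (N : ℕ) : a N + 2 * b N
    = 2 * π ^ 2 / 3 * (1 / (N : ℝ) ^ 4) - 6 * (1 / (N : ℝ) ^ 6) := by
  cases N with
  | zero => simp [a_zero, b_zero]
  | succ K =>
    have hNR : (((K + 1 : ℕ)) : ℝ) = (K : ℝ) + 1 := by push_cast; ring
    rw [a_closed, b_closed, hNR]
    have hNpos : (0 : ℝ) < (K : ℝ) + 1 := by positivity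
    field_simp
    ring

lemma bern6 : bernoulli' 6 = 1 / 42 := by
  have h5 : bernoulli' 5 = 0 := bernoulli'_eq_zero_of_odd (by decide) (by norm_num)
  rw [bernoulli'_def]
  norm_num [Finset.sum_range_succ, bernoulli'_two, bernoulli'_four, bernoulli'_zero,
    bernoulli'_one, bernoulli'_three, h5, Nat.choose]

lemma hasSum_zeta_six : HasSum (fun n : ℕ => (1 : ℝ) / (n : ℝ) ^ 6) (π ^ 6 / 945) := by
  have hb : bernoulli 6 = 1 / 42 := by
    rw [bernoulli_eq_bernoulli'_of_ne_one (by norm_num), bern6]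
  have h := hasSum_zeta_nat (k := 3) three_ne_zero
  rw [hb] at h
  norm_num [Nat.factorial] at h
  have heq : (32 : ℝ) * π ^ 6 * (1 / 42) / 720 = π ^ 6 / 945 := by ring
  rw [heq] at h
  convert h using 2
  norm_num

lemma pnat_tsum (f : ℕ → ℝ) (hf : f 0 = 0) : ∑' n : ℕ+, f (n : ℕ) = ∑' n : ℕ, f n := by
  apply PNat.coe_injective.tsum_eq
  intro x hx
  rcases Nat.eq_zero_or_pos x with h0 | h0
  · exact absurd (h0 ▸ hf) hx
  · exact ⟨⟨x, h0⟩, rfl⟩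

lemma tsum_F_value : ∑' p : ℕ × ℕ, F p = π ^ 6 / 2835 := by
  have h3 : ∑' N : ℕ, (a N + 2 * b N) = 3 * ∑' p : ℕ × ℕ, F p := by
    rw [Summable.tsum_add ha_summable (hb_summable.mul_left 2), tsum_mul_left, tsum_a, tsum_b]
    ring
  have hc : HasSum (fun N : ℕ => 2 * π ^ 2 / 3 * (1 / (N : ℝ) ^ 4) - 6 * (1 / (N : ℝ) ^ 6))
      (2 * π ^ 2 / 3 * (π ^ 4 / 90) - 6 * (π ^ 6 / 945)) :=
    (hasSum_zeta_four.mul_left _).sub (hasSum_zeta_six.mul_left _)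
  have h4 : ∑' N : ℕ, (a N + 2 * b N) = 2 * π ^ 2 / 3 * (π ^ 4 / 90) - 6 * (π ^ 6 / 945) := by
    rw [tsum_congr key]
    exact hc.tsum_eq
  have h5 : (2 : ℝ) * π ^ 2 / 3 * (π ^ 4 / 90) - 6 * (π ^ 6 / 945) = π ^ 6 / 945 := by ring
  have h6 : 3 * ∑' p : ℕ × ℕ, F p = π ^ 6 / 945 := by rw [← h3, h4, h5]
  linarith

end Stmt8Aux

theorem stmt_8 :
    ∑' (m : ℕ+), ∑' (n : ℕ+),
        (1 : ℝ) / (((m : ℕ) : ℝ) ^ 2 * ((n : ℕ) : ℝ) ^ 2 * (((m : ℕ) : ℝ) + ((n : ℕ) : ℝ)) ^ 2)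
      = Real.pi ^ 6 / 2835 := by
  have hinner : ∀ m : ℕ+, ∑' (n : ℕ+),
      (1 : ℝ) / (((m : ℕ) : ℝ) ^ 2 * ((n : ℕ) : ℝ) ^ 2 * (((m : ℕ) : ℝ) + ((n : ℕ) : ℝ)) ^ 2)
      = Stmt8Aux.b (m : ℕ) := by
    intro m
    have := Stmt8Aux.pnat_tsum (fun n => Stmt8Aux.F ((m : ℕ), n)) (Stmt8Aux.F_zero_right _)
    exact this
  rw [tsum_congr hinner]
  rw [Stmt8Aux.pnat_tsum Stmt8Aux.b Stmt8Aux.b_zero, Stmt8Aux.tsum_b, Stmt8Aux.tsum_F_value]
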